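/- For every pair (a,b) of initial data in the energy space there exist two lacunary pairs (a¹,b¹) and (a²,b²) in the energy space such that a_i = a¹_i + a²_i and b_i = b¹_i + b²_i for every i ≥ 1. -/

import Mathlib

open Filter Set

/-- Derivative from within the half line `[0, ∞)`. -/
noncomputable def derIci (f : ℝ → ℝ) : ℝ → ℝ := derivWithin f (Set.Ici (0 : ℝ))

/-- The pair `(a, b)` belongs to the energy space `D(A^{1/2}) × H`. -/
def InEnergy (lam a b : ℕ → ℝ) : Prop :=
  Summable fun i => (b i) ^ 2 + (lam i) ^ 2 * (a i) ^ 2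

/-- `R_k(a,b) = Σ_{i>k} (b_i² + λ_i² a_i²)`. -/
noncomputable def Rk (lam a b : ℕ → ℝ) (k : ℕ) : ℝ :=
  ∑' i : ℕ, if k < i then (b i) ^ 2 + (lam i) ^ 2 * (a i) ^ 2 else 0

/-- Lacunary (spectral gap) data: `R_k(a,b)·k²·exp(k λ_k) ≤ 1` for infinitely many
positive integers `k`. -/
def Lacunary (lam a b : ℕ → ℝ) : Prop :=
  InEnergy lam a b ∧
    {k : ℕ | 0 < k ∧
      Rk lam a b k * (k : ℝ) ^ 2 * Real.exp ((k : ℝ) * lam k) ≤ 1}.Infinite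

/-- `M(σ) = ∫₀^σ m(s) ds`. -/
noncomputable def Mfun (m : ℝ → ℝ) (σ : ℝ) : ℝ := ∫ s in (0:ℝ)..σ, m s

/-- The conserved quantity `H₀ = Σ_i b_i² + M(Σ_i λ_i² a_i²)`. -/
noncomputable def H0 (lam : ℕ → ℝ) (m : ℝ → ℝ) (a b : ℕ → ℝ) : ℝ :=
  (∑' i, (b i) ^ 2) + Mfun m (∑' i, (lam i) ^ 2 * (a i) ^ 2)

/-- Galerkin approximation of order `n` (components of index `> n` extended by zero):
the solution of `v_i'' + m(Σ_{j≤n} λ_j² v_j²) λ_i² v_i = 0` for `i ≤ n`, with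
`v_i(0) = a_i`, `v_i'(0) = b_i`. -/
def GalerkinSol (lam : ℕ → ℝ) (m : ℝ → ℝ) (a b : ℕ → ℝ) (n : ℕ)
    (v : ℕ → ℝ → ℝ) : Prop :=
  (∀ i, ContDiffOn ℝ 2 (v i) (Set.Ici 0)) ∧
  (∀ i ≤ n, v i 0 = a i) ∧
  (∀ i ≤ n, derIci (v i) 0 = b i) ∧
  (∀ i, n < i → ∀ t, v i t = 0) ∧
  (∀ i ≤ n, ∀ t, 0 ≤ t →
    derIci (derIci (v i)) t
      + m (∑ j ∈ Finset.range (n + 1), (lam j) ^ 2 * (v j t) ^ 2)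
        * (lam i) ^ 2 * v i t = 0)

/-- Global weak solution with initial data `(a,b)`: a family `v_i ∈ C²([0,∞))` with
`v_i(0) = a_i`, `v_i'(0) = b_i`, such that `Σ v_i'(t)²` and `Σ λ_i² v_i(t)²` converge,
the maps `t ↦ (v_i'(t))_i` and `t ↦ (λ_i v_i(t))_i` are continuous from `[0,∞)` into
`ℓ²`, and `v_i'' + m(Σ_j λ_j² v_j²) λ_i² v_i = 0` for every `i` and every `t ≥ 0`. -/
def WeakSol (lam : ℕ → ℝ) (m : ℝ → ℝ) (a b : ℕ → ℝ) (v : ℕ → ℝ → ℝ) : Prop :=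
  (∀ i, ContDiffOn ℝ 2 (v i) (Set.Ici 0)) ∧
  (∀ i, v i 0 = a i) ∧
  (∀ i, derIci (v i) 0 = b i) ∧
  (∀ t, 0 ≤ t → Summable fun i => (derIci (v i) t) ^ 2) ∧
  (∀ t, 0 ≤ t → Summable fun i => (lam i) ^ 2 * (v i t) ^ 2) ∧
  (∀ t₀, 0 ≤ t₀ → Tendsto (fun t => ∑' i, (derIci (v i) t - derIci (v i) t₀) ^ 2)
      (nhdsWithin t₀ (Set.Ici 0)) (nhds 0)) ∧
  (∀ t₀, 0 ≤ t₀ → Tendsto (fun t => ∑' i, (lam i) ^ 2 * (v i t - v i t₀) ^ 2)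
      (nhdsWithin t₀ (Set.Ici 0)) (nhds 0)) ∧
  (∀ i, ∀ t, 0 ≤ t →
    derIci (derIci (v i)) t
      + m (∑' j, (lam j) ^ 2 * (v j t) ^ 2) * (lam i) ^ 2 * v i t = 0)

/-- every pair of initial data in the energy space is the sum of two
lacunary pairs. -/
theorem stmt1 (lam : ℕ → ℝ) (hpos : ∀ i, 0 < lam i) (hmono : Monotone lam)
    (htop : Tendsto lam atTop atTop)
    (a b : ℕ → ℝ) (hab : InEnergy lam a b) :
    ∃ a₁ b₁ a₂ b₂ : ℕ → ℝ,
      Lacunary lam a₁ b₁ ∧ Lacunary lam a₂ b₂ ∧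
      (∀ i, a i = a₁ i + a₂ i) ∧ (∀ i, b i = b₁ i + b₂ i) := by
  classical
  set f : ℕ → ℝ := fun i => (b i) ^ 2 + (lam i) ^ 2 * (a i) ^ 2 with hfdef
  have hf0 : ∀ i, 0 ≤ f i := fun i => by positivity
  have hfs : Summable f := hab
  have hRk : ∀ (c d : ℕ → ℝ) (m : ℕ),
      Rk lam c d m = ∑' i : ℕ, if m < i then (d i) ^ 2 + (lam i) ^ 2 * (c i) ^ 2 else 0 :=
    fun _ _ _ => rfl
  -- tail formula and convergence to 0
  have hT : ∀ k, Rk lam a b k = ∑' n : ℕ, f (n + (k + 1)) := by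
    intro k
    have hinj : Function.Injective (fun n : ℕ => n + (k + 1)) := fun x y h => by
      simpa using h
    have hsupp : Function.support (fun x => if k < x then f x else 0) ⊆
        Set.range (fun n : ℕ => n + (k + 1)) := by
      intro x hx
      rcases lt_or_ge x (k + 1) with h | h
      · exfalso; apply hx; simp [Nat.not_lt.mpr (Nat.lt_succ_iff.mp h)]
      · exact ⟨x - (k + 1), by simpa using Nat.sub_add_cancel h⟩
    have := Function.Injective.tsum_eq hinj hsupp
    rw [hRk, ← this]
    exact tsum_congr fun n => by rw [if_pos (by omega : k < n + (k + 1))]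
  have htail : Tendsto (Rk lam a b) atTop (nhds 0) := by
    have h1 : Tendsto (fun i => ∑' n : ℕ, f (n + i)) atTop (nhds 0) :=
      tendsto_sum_nat_add f
    have h2 : Tendsto (fun k : ℕ => k + 1) atTop atTop := tendsto_add_atTop_nat 1
    have := h1.comp h2
    exact this.congr fun k => (hT k).symm
  -- the smallness threshold
  set ε : ℕ → ℝ := fun m => ((m : ℝ) ^ 2 * Real.exp ((m : ℝ) * lam m))⁻¹ with hεdef
  have hεpos : ∀ m : ℕ, 0 < m → 0 < ε m := by
    intro m hm
    have hm' : (0 : ℝ) < (m : ℝ) := by exact_mod_cast hm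
    have : (0 : ℝ) < (m : ℝ) ^ 2 * Real.exp ((m : ℝ) * lam m) := by positivity
    exact inv_pos.mpr this
  have hex : ∀ m : ℕ, ∃ N, (0 < m → Rk lam a b (N - 1) ≤ ε m) ∧ m < N := by
    intro m
    by_cases hm : 0 < m
    · obtain ⟨K, hK⟩ := Filter.eventually_atTop.mp (htail.eventually_lt_const (hεpos m hm))
      refine ⟨max (m + 1) (K + 1), fun _ => ?_, by omega⟩
      exact le_of_lt (hK _ (by omega))
    · exact ⟨m + 1, fun h => absurd h hm, by omega⟩
  choose next hnext hmlt using hex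
  -- the lacunary sequence of indices
  set n : ℕ → ℕ := fun j => Nat.rec 1 (fun _ p => next p) j with hndef
  have hsucc : ∀ j, n (j + 1) = next (n j) := fun j => rfl
  have hnpos : ∀ j, 0 < n j := by
    intro j
    induction j with
    | zero => exact one_pos
    | succ j ih => rw [hsucc]; exact lt_trans ih (hmlt (n j))
  have hstrict : StrictMono n :=
    strictMono_nat_of_lt_succ fun j => by rw [hsucc]; exact hmlt (n j)
  have hbnd : ∀ j, Rk lam a b (n (j + 1) - 1) ≤ ε (n j) := fun j => by
    rw [hsucc]; exact hnext (n j) (hnpos j)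
  -- the block-counting function
  set phi : ℕ → ℕ := fun i => ((Finset.range (i + 1)).filter fun j => n j ≤ i).card with hphidef
  have hphi : ∀ j i, n j ≤ i → i < n (j + 1) → phi i = j + 1 := by
    intro j i hji hij
    have hjle : j ≤ n j := hstrict.le_apply
    have : ((Finset.range (i + 1)).filter fun l => n l ≤ i) = Finset.range (j + 1) := by
      ext l
      simp only [Finset.mem_filter, Finset.mem_range]
      constructor
      · rintro ⟨hl, hnl⟩
        by_contra h
        have := hstrict.monotone (show j + 1 ≤ l by omega)
        omega
      · intro hl
        have h1 : n l ≤ n j := hstrict.monotone (by omega)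
        exact ⟨by omega, by omega⟩
    rw [hphidef]
    simp only []
    rw [this, Finset.card_range]
  -- key estimate: data vanishing on the block `(n j, n (j+1))` satisfies the
  -- lacunarity inequality at `k = n j`
  have key : ∀ (c d : ℕ → ℝ) (j : ℕ),
      (∀ i, (d i) ^ 2 + (lam i) ^ 2 * (c i) ^ 2 ≤ f i) →
      (∀ i, n j < i → i < n (j + 1) → (d i) ^ 2 + (lam i) ^ 2 * (c i) ^ 2 = 0) →
      Rk lam c d (n j) * (n j : ℝ) ^ 2 * Real.exp ((n j : ℝ) * lam (n j)) ≤ 1 := by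
    intro c d j hle hz
    set g : ℕ → ℝ := fun i => (d i) ^ 2 + (lam i) ^ 2 * (c i) ^ 2 with hgdef
    have hg0 : ∀ i, 0 ≤ g i := fun i => by positivity
    have h1 : Rk lam c d (n j) ≤ Rk lam a b (n (j + 1) - 1) := by
      rw [hRk, hRk]
      have hpt : ∀ i, (if n j < i then g i else 0) ≤
          (if n (j + 1) - 1 < i then f i else 0) := by
        intro i
        by_cases hi : n (j + 1) - 1 < i
        · rw [if_pos hi]
          by_cases hji : n j < i
          · rw [if_pos hji]; exact hle i
          · rw [if_neg hji]; exact hf0 i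
        · have hnp := hnpos (j + 1)
          have hi' : i < n (j + 1) := by omega
          rw [if_neg hi]
          by_cases hji : n j < i
          · rw [if_pos hji]; exact le_of_eq (hz i hji hi')
          · rw [if_neg hji]
      refine Summable.tsum_le_tsum hpt ?_ ?_
      · refine Summable.of_nonneg_of_le (fun i => ?_) (fun i => ?_) hfs
        · by_cases hji : n j < i <;> simp [hji, hg0 i] <;> positivity
        · by_cases hji : n j < i <;> simp [hji, hg0 i, hf0 i, hle i]
      · refine Summable.of_nonneg_of_le (fun i => ?_) (fun i => ?_) hfs
        · by_cases hi : n (j + 1) - 1 < i <;> simp [hi, hf0 i] <;> positivity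
        · by_cases hi : n (j + 1) - 1 < i <;> simp [hi, hf0 i] <;> exact le_rfl
    have h2 : Rk lam c d (n j) ≤ ε (n j) := le_trans h1 (hbnd j)
    have hk' : (0 : ℝ) < (n j : ℝ) := by exact_mod_cast hnpos j
    have hprod : (0 : ℝ) < (n j : ℝ) ^ 2 * Real.exp ((n j : ℝ) * lam (n j)) := by positivity
    calc Rk lam c d (n j) * (n j : ℝ) ^ 2 * Real.exp ((n j : ℝ) * lam (n j))
        = Rk lam c d (n j) * ((n j : ℝ) ^ 2 * Real.exp ((n j : ℝ) * lam (n j))) := by ring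
      _ ≤ ε (n j) * ((n j : ℝ) ^ 2 * Real.exp ((n j : ℝ) * lam (n j))) :=
          mul_le_mul_of_nonneg_right h2 (le_of_lt hprod)
      _ = 1 := inv_mul_cancel₀ (ne_of_gt hprod)
  -- the splitting
  refine ⟨fun i => if Odd (phi i) then a i else 0, fun i => if Odd (phi i) then b i else 0,
    fun i => if Odd (phi i) then 0 else a i, fun i => if Odd (phi i) then 0 else b i,
    ⟨?_, ?_⟩, ⟨?_, ?_⟩, fun i => by by_cases h : Odd (phi i) <;> simp [h],
    fun i => by by_cases h : Odd (phi i) <;> simp [h]⟩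
  · -- InEnergy of pair 1
    refine Summable.of_nonneg_of_le (fun i => by positivity) (fun i => ?_) hfs
    by_cases h : Odd (phi i) <;> simp [h, hf0 i, hfdef, le_refl] <;> positivity
  · -- Lacunary set infinite for pair 1
    refine Set.infinite_of_injective_forall_mem
      (f := fun t : ℕ => n (2 * t + 1)) ?_ ?_
    · exact (hstrict.comp fun x y h =>
        show 2 * x + 1 < 2 * y + 1 by omega).injective
    · intro t
      simp only [Set.mem_setOf_eq]
      refine ⟨hnpos (2 * t + 1), key _ _ (2 * t + 1) (fun i => ?_) (fun i h1 h2 => ?_)⟩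
      · by_cases h : Odd (phi i) <;> simp [h, hf0 i, hfdef, le_refl] <;> positivity
      · have hp := hphi (2 * t + 1) i (le_of_lt h1) h2
        have hno : ¬ Odd (phi i) := by rw [hp]; simp only [Nat.odd_iff]; omega
        simp [hno]
  · -- InEnergy of pair 2
    refine Summable.of_nonneg_of_le (fun i => by positivity) (fun i => ?_) hfs
    by_cases h : Odd (phi i) <;> simp [h, hf0 i, hfdef, le_refl] <;> positivity
  · -- Lacunary set infinite for pair 2
    refine Set.infinite_of_injective_forall_mem
      (f := fun t : ℕ => n (2 * t)) ?_ ?_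
    · exact (hstrict.comp fun x y h =>
        show 2 * x < 2 * y by omega).injective
    · intro t
      simp only [Set.mem_setOf_eq]
      refine ⟨hnpos (2 * t), key _ _ (2 * t) (fun i => ?_) (fun i h1 h2 => ?_)⟩
      · by_cases h : Odd (phi i) <;> simp [h, hf0 i, hfdef, le_refl] <;> positivity
      · have hp := hphi (2 * t) i (le_of_lt h1) h2
        have hyes : Odd (phi i) := by rw [hp]; simp only [Nat.odd_iff]; omega
        simp [hyes]
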